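/- Given a fill level c ≥ 0, a feasible schedule with p_i ≤ c for every interval i exists if and only if the maximum s–t flow in the FOCS flow network with sink-edge capacities c·L_i equals Σ_j e_j. -/
import Mathlib


/-- Fill-level characterization: a feasible schedule with all powers at most `c`
exists iff the maximum `s`–`t` flow of the FOCS network with sink capacities
`c * L i` attains the value `∑ j, e j`.  Flows in the tripartite FOCS network are
encoded by their job-to-interval components `x`. -/
theorem fill_level_iff_maxflow (n m : ℕ) (A : Fin n → Fin m → Bool)
    (L : Fin m → ℝ) (pmax e : Fin n → ℝ)
    (hL : ∀ i, 0 < L i) (he : ∀ j, 0 ≤ e j) (c : ℝ) (hc : 0 ≤ c) :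
    (∃ E : Fin m → Fin n → ℝ,
      (∀ i j, 0 ≤ E i j) ∧ (∀ i j, A j i = false → E i j = 0) ∧
      (∀ i j, E i j ≤ pmax j * L i) ∧ (∀ j, ∑ i, E i j = e j) ∧
      (∀ i, (∑ j, E i j) / L i ≤ c)) ↔
    IsGreatest {v : ℝ | ∃ x : Fin m → Fin n → ℝ,
      (∀ i j, 0 ≤ x i j) ∧ (∀ i j, A j i = false → x i j = 0) ∧
      (∀ i j, x i j ≤ pmax j * L i) ∧ (∀ j, ∑ i, x i j ≤ e j) ∧
      (∀ i, ∑ j, x i j ≤ c * L i) ∧ v = ∑ j, ∑ i, x i j} (∑ j, e j) := by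
  constructor
  · rintro ⟨E, h0, hA, hP, hE, hp⟩
    constructor
    · exact ⟨E, h0, hA, hP, fun j => (hE j).le, fun i =>
        (div_le_iff₀ (hL i)).mp (hp i) |>.trans_eq rfl,
        by simp [hE]⟩
    · rintro v ⟨x, hx0, hxA, hxP, hxe, hxc, rfl⟩
      exact Finset.sum_le_sum fun j _ => hxe j
  · rintro ⟨⟨x, hx0, hxA, hxP, hxe, hxc, hv⟩, -⟩
    have hall : ∀ j ∈ Finset.univ, ∑ i, x i j = e j := by
      rw [← Finset.sum_eq_sum_iff_of_le (fun j _ => hxe j)]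
      exact hv.symm
    refine ⟨x, hx0, hxA, hxP, fun j => hall j (Finset.mem_univ j), fun i => ?_⟩
    exact (div_le_iff₀ (hL i)).mpr (hxc i)
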